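/- The quadratic Gaudin Hamiltonians commute: for pairwise distinct complex numbers z_1,…,z_n and an orthonormal basis {x_a} of a semisimple Lie algebra g with respect to the Killing form, the elements H_i = Σ_{k≠i} Σ_a x_a^{(i)} x_a^{(k)} / (z_i − z_k) of U(g)^{⊗n} satisfy H_i H_j = H_j H_i for all i,j. -/

import Mathlib

open scoped TensorProduct PiTensorProduct

section gaudinLie
attribute [local instance 100] LieRing.ofAssociativeRing

section aux
variable {n : ℕ} {A : Type*} [Ring A] [Algebra ℂ A]

/-- The embedding of `A` into the `i`-th slot of the tensor power. -/
noncomputable def gaudinE (i : Fin n) : A →ₗ[ℂ] ⨂[ℂ] (_ : Fin n), A where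
  toFun x := PiTensorProduct.tprod ℂ (Function.update (fun _ => (1 : A)) i x)
  map_add' x y := MultilinearMap.map_update_add _ _ _ _ _
  map_smul' c x := MultilinearMap.map_update_smul _ _ _ _ _

lemma gaudinE_apply (i : Fin n) (x : A) :
    gaudinE i x = PiTensorProduct.tprod ℂ (Function.update (fun _ => (1 : A)) i x) := rfl

lemma gaudinE_mul_same (i : Fin n) (x y : A) :
    gaudinE i x * gaudinE i y = gaudinE (A := A) i (x * y) := by
  rw [gaudinE_apply, gaudinE_apply, gaudinE_apply, PiTensorProduct.tprod_mul_tprod]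
  congr 1
  funext m
  by_cases h : m = i <;> simp [Function.update_apply, h]

lemma gaudinE_mul_comm {i k : Fin n} (h : i ≠ k) (x y : A) :
    Commute (gaudinE i x) (gaudinE k y) := by
  unfold Commute SemiconjBy
  rw [gaudinE_apply, gaudinE_apply, PiTensorProduct.tprod_mul_tprod,
    PiTensorProduct.tprod_mul_tprod]
  congr 1
  funext m
  rcases eq_or_ne m i with rfl | hi
  · simp [Function.update_apply, h]
  · rcases eq_or_ne m k with rfl | hk
    · simp [Function.update_apply, h, hi]
    · simp [Function.update_apply, hi, hk]

lemma gaudinE_lie_same (i : Fin n) (x y : A) :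
    ⁅gaudinE i x, gaudinE i y⁆ = gaudinE (A := A) i ⁅x, y⁆ := by
  rw [Ring.lie_def, Ring.lie_def, gaudinE_mul_same, gaudinE_mul_same, map_sub]

lemma gaudinE_lie_comm {i k : Fin n} (h : i ≠ k) (x y : A) :
    ⁅gaudinE i x, gaudinE k y⁆ = 0 := by
  rw [Ring.lie_def, (gaudinE_mul_comm h x y).eq, sub_self]

end aux

section liesum
variable {L : Type*} [LieRing L] {α : Type*}

lemma lie_sum' (x : L) (s : Finset α) (f : α → L) :
    ⁅x, ∑ i ∈ s, f i⁆ = ∑ i ∈ s, ⁅x, f i⁆ :=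
  map_sum (AddMonoidHom.mk' (fun y => ⁅x, y⁆) (lie_add x)) f s

lemma sum_lie' (x : L) (s : Finset α) (f : α → L) :
    ⁅∑ i ∈ s, f i, x⁆ = ∑ i ∈ s, ⁅f i, x⁆ :=
  map_sum (AddMonoidHom.mk' (fun y => ⁅y, x⁆) (fun a b => add_lie a b x)) f s

end liesum

lemma gaudin_scalar_identity {u v w : ℂ} (huv : u ≠ v) (huw : u ≠ w) (hvw : v ≠ w) :
    -((u - v)⁻¹ * (v - w)⁻¹) - (u - w)⁻¹ * (v - u)⁻¹ + (u - w)⁻¹ * (v - w)⁻¹ = 0 := by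
  have h1 : u - v ≠ 0 := sub_ne_zero.mpr huv
  have h2 : u - w ≠ 0 := sub_ne_zero.mpr huw
  have h3 : v - w ≠ 0 := sub_ne_zero.mpr hvw
  have h4 : v - u ≠ 0 := sub_ne_zero.mpr huv.symm
  field_simp
  ring

end gaudinLie

open Classical in
/-- The quadratic Gaudin Hamiltonians pairwise commute. -/
theorem gaudin_hamiltonians_commute
    (g : Type*) [LieRing g] [LieAlgebra ℂ g] [Module.Finite ℂ g]
    [LieAlgebra.IsSemisimple ℂ g]
    (ι : Type*) [Fintype ι] (b : Module.Basis ι ℂ g)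
    (hb : ∀ a a' : ι, killingForm ℂ g (b a) (b a') = if a = a' then 1 else 0)
    (n : ℕ) (z : Fin n → ℂ) (hz : Function.Injective z)
    (X : ι → Fin n → ⨂[ℂ] (_ : Fin n), UniversalEnvelopingAlgebra ℂ g)
    (hX : ∀ a i, X a i = PiTensorProduct.tprod ℂ
      (Function.update (fun _ => (1 : UniversalEnvelopingAlgebra ℂ g)) i
        (UniversalEnvelopingAlgebra.ι ℂ (b a))))
    (H : Fin n → ⨂[ℂ] (_ : Fin n), UniversalEnvelopingAlgebra ℂ g)
    (hH : ∀ i, H i = ∑ k ∈ Finset.univ.filter (· ≠ i), ∑ a : ι,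
      (z i - z k)⁻¹ • (X a i * X a k)) :
    ∀ i j, H i * H j = H j * H i := by
  classical
  -- notation
  set A := UniversalEnvelopingAlgebra ℂ g with hA
  letI : LieRing A := LieRing.ofAssociativeRing
  letI : LieRing (⨂[ℂ] (_ : Fin n), A) := LieRing.ofAssociativeRing
  set xa : ι → A := fun a => UniversalEnvelopingAlgebra.ι ℂ (b a) with hxa
  set c : Fin n → Fin n → ℂ := fun p q => (z p - z q)⁻¹ with hc
  set Γ : ι → ι → ι → ℂ := fun a a' e => killingForm ℂ g ⁅b a, b a'⁆ (b e) with hΓ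
  set Ω : Fin n → Fin n → ⨂[ℂ] (_ : Fin n), A :=
    fun p q => ∑ a : ι, gaudinE p (xa a) * gaudinE q (xa a) with hΩ
  have hXE : ∀ a p, X a p = gaudinE p (xa a) := fun a p => by rw [hX]; rfl
  have hHe : ∀ p, H p = ∑ k ∈ Finset.univ.filter (· ≠ p), c p k • Ω p k := by
    intro p
    rw [hH]
    refine Finset.sum_congr rfl fun k _ => ?_
    rw [hΩ, Finset.smul_sum]
    exact Finset.sum_congr rfl fun a _ => by rw [hXE, hXE]
  -- representation in the orthonormal basis
  have hrepr : ∀ x : g, x = ∑ e : ι, killingForm ℂ g x (b e) • b e := by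
    intro x
    conv_lhs => rw [← b.sum_repr x]
    refine Finset.sum_congr rfl fun e _ => ?_
    congr 1
    conv_rhs => rw [← b.sum_repr x]
    rw [map_sum, LinearMap.sum_apply]
    simp only [map_smul, LinearMap.smul_apply, hb, smul_eq_mul, mul_ite, mul_one, mul_zero]
    rw [Finset.sum_ite_eq' Finset.univ e (b.repr x)]
    simp
  have hGskew : ∀ a a' e, Γ a a' e = - Γ e a' a := by
    intro a a' e
    have h1 := LieModule.traceForm_apply_lie_apply' ℂ g g (b a) (b a') (b e)
    have h2 := LieModule.traceForm_apply_lie_apply' ℂ g g (b e) (b a') (b a)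
    rw [hΓ]
    simp only
    rw [h1, h2, neg_neg, ← lie_skew, map_neg, neg_neg]
  have hlie_basis : ∀ a a', (⁅b a, b a'⁆ : g) = ∑ e : ι, Γ a a' e • b e := by
    intro a a'
    conv_lhs => rw [hrepr ⁅b a, b a'⁆]
  have hlie_same : ∀ (p : Fin n) a a',
      ⁅gaudinE p (xa a), gaudinE p (xa a')⁆
        = ∑ e : ι, Γ a a' e • gaudinE p (xa e) := by
    intro p a a'
    rw [gaudinE_lie_same]
    have hcoe : ∀ x : g, (UniversalEnvelopingAlgebra.ι ℂ (L := g)) x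
        = (UniversalEnvelopingAlgebra.ι ℂ (L := g)).toLinearMap x := fun _ => rfl
    have h0 : (⁅xa a, xa a'⁆ : A) = UniversalEnvelopingAlgebra.ι ℂ ⁅b a, b a'⁆ := by
      rw [hxa]; exact (LieHom.map_lie _ _ _).symm
    rw [h0, hcoe, hlie_basis a a', map_sum, map_sum]
    refine Finset.sum_congr rfl fun e _ => ?_
    rw [map_smul, map_smul, ← hcoe]
  have hΩsymm : ∀ p q, p ≠ q → Ω p q = Ω q p := by
    intro p q hpq
    exact Finset.sum_congr rfl fun a _ => (gaudinE_mul_comm hpq (xa a) (xa a)).eq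
  -- vanishing bracket for disjoint slots
  have hC0 : ∀ p q r s : Fin n, p ≠ r → p ≠ s → q ≠ r → q ≠ s →
      ⁅Ω p q, Ω r s⁆ = 0 := by
    intro p q r s hpr hps hqr hqs
    rw [hΩ]
    simp only
    rw [sum_lie']
    refine Finset.sum_eq_zero fun a _ => ?_
    rw [lie_sum']
    refine Finset.sum_eq_zero fun a' _ => ?_
    have hcomm : Commute (gaudinE p (xa a) * gaudinE q (xa a))
        (gaudinE r (xa a') * gaudinE s (xa a')) := by
      exact Commute.mul_left
        (Commute.mul_right (gaudinE_mul_comm hpr _ _) (gaudinE_mul_comm hps _ _))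
        (Commute.mul_right (gaudinE_mul_comm hqr _ _) (gaudinE_mul_comm hqs _ _))
    rw [Ring.lie_def, hcomm.eq, sub_self]
  -- rearrangement lemmas
  have hLA : ∀ (p q r : Fin n), p ≠ q → p ≠ r → q ≠ r → ∀ u u' v v' : A,
      ⁅gaudinE p u * gaudinE q u', gaudinE p v * gaudinE r v'⁆
        = ⁅gaudinE p u, gaudinE p v⁆ * (gaudinE q u' * gaudinE r v') := by
    intro p q r hpq hpr hqr u u' v v'
    set P := gaudinE (n := n) p u
    set Q := gaudinE (n := n) q u'
    set P' := gaudinE (n := n) p v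
    set R := gaudinE (n := n) r v'
    have hQP' : Q * P' = P' * Q := (gaudinE_mul_comm hpq.symm u' v).eq
    have hQR : Q * R = R * Q := (gaudinE_mul_comm hqr u' v').eq
    have hPR : P * R = R * P := (gaudinE_mul_comm hpr u v').eq
    rw [Ring.lie_def, Ring.lie_def, sub_mul]
    have e1 : P * Q * (P' * R) = P * P' * (Q * R) := by
      rw [mul_assoc P Q, ← mul_assoc Q P', hQP', mul_assoc P' Q, ← mul_assoc P P']
    have e2 : P' * R * (P * Q) = P' * P * (Q * R) := by
      rw [mul_assoc P' R, ← mul_assoc R P, ← hPR, mul_assoc P R, ← hQR, ← mul_assoc P' P]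
    rw [e1, e2]
  have hLB : ∀ (p q r : Fin n), p ≠ q → p ≠ r → q ≠ r → ∀ u u' v v' : A,
      ⁅gaudinE p u * gaudinE q u', gaudinE q v * gaudinE r v'⁆
        = gaudinE p u * (⁅gaudinE q u', gaudinE q v⁆ * gaudinE r v') := by
    intro p q r hpq hpr hqr u u' v v'
    set P := gaudinE (n := n) p u
    set Q := gaudinE (n := n) q u'
    set Q' := gaudinE (n := n) q v
    set R := gaudinE (n := n) r v'
    have hQ'P : Q' * P = P * Q' := (gaudinE_mul_comm hpq.symm v u).eq
    have hRP : R * P = P * R := (gaudinE_mul_comm hpr.symm v' u).eq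
    have hRQ : R * Q = Q * R := (gaudinE_mul_comm hqr.symm v' u').eq
    rw [Ring.lie_def, Ring.lie_def, sub_mul, mul_sub]
    have e1 : P * Q * (Q' * R) = P * (Q * Q' * R) := by
      rw [mul_assoc P Q, ← mul_assoc Q Q']
    have e2 : Q' * R * (P * Q) = P * (Q' * Q * R) := by
      rw [mul_assoc Q' R, ← mul_assoc R P, hRP, mul_assoc P R, hRQ, ← mul_assoc Q' P,
        hQ'P, mul_assoc P Q', ← mul_assoc Q' Q]
    rw [e1, e2]
  have hbrkA : ∀ p q r : Fin n, p ≠ q → p ≠ r → q ≠ r →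
      ⁅Ω p q, Ω p r⁆ = ∑ a : ι, ∑ a' : ι, ∑ e : ι,
        Γ a a' e • (gaudinE p (xa e) * (gaudinE q (xa a) * gaudinE r (xa a'))) := by
    intro p q r hpq hpr hqr
    rw [hΩ]
    simp only
    rw [sum_lie']
    refine Finset.sum_congr rfl fun a _ => ?_
    rw [lie_sum']
    refine Finset.sum_congr rfl fun a' _ => ?_
    rw [hLA p q r hpq hpr hqr, hlie_same p a a', Finset.sum_mul]
    refine Finset.sum_congr rfl fun e _ => ?_
    rw [smul_mul_assoc]
  have hbrkB : ∀ p q r : Fin n, p ≠ q → p ≠ r → q ≠ r →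
      ⁅Ω p q, Ω q r⁆ = ∑ a : ι, ∑ a' : ι, ∑ e : ι,
        Γ a a' e • (gaudinE p (xa a) * (gaudinE q (xa e) * gaudinE r (xa a'))) := by
    intro p q r hpq hpr hqr
    rw [hΩ]
    simp only
    rw [sum_lie']
    refine Finset.sum_congr rfl fun a _ => ?_
    rw [lie_sum']
    refine Finset.sum_congr rfl fun a' _ => ?_
    rw [hLB p q r hpq hpr hqr, hlie_same q a a', Finset.sum_mul, Finset.mul_sum]
    refine Finset.sum_congr rfl fun e _ => ?_
    rw [smul_mul_assoc, mul_smul_comm]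
  have reix : ∀ f : ι → ι → ι → ⨂[ℂ] (_ : Fin n), A,
      (∑ a : ι, ∑ a' : ι, ∑ e : ι, f a a' e) = ∑ a : ι, ∑ a' : ι, ∑ e : ι, f e a' a :=
    fun f =>
    calc (∑ a : ι, ∑ a' : ι, ∑ e : ι, f a a' e)
        = ∑ a' : ι, ∑ a : ι, ∑ e : ι, f a a' e := Finset.sum_comm
      _ = ∑ a' : ι, ∑ e : ι, ∑ a : ι, f a a' e :=
          Finset.sum_congr rfl fun a' _ => Finset.sum_comm
      _ = ∑ e : ι, ∑ a' : ι, ∑ a : ι, f a a' e := Finset.sum_comm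
  have hC1 : ∀ p q r : Fin n, p ≠ q → p ≠ r → q ≠ r →
      ⁅Ω p q, Ω p r⁆ + ⁅Ω p q, Ω q r⁆ = 0 := by
    intro p q r hpq hpr hqr
    rw [hbrkA p q r hpq hpr hqr, hbrkB p q r hpq hpr hqr,
      reix (fun a a' e => Γ a a' e • (gaudinE p (xa a) * (gaudinE q (xa e) * gaudinE r (xa a')))),
      ← Finset.sum_add_distrib]
    refine Finset.sum_eq_zero fun a _ => ?_
    rw [← Finset.sum_add_distrib]
    refine Finset.sum_eq_zero fun a' _ => ?_
    rw [← Finset.sum_add_distrib]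
    refine Finset.sum_eq_zero fun e _ => ?_
    rw [← add_smul, hGskew a a' e, neg_add_cancel, zero_smul]
  -- main computation
  intro i j
  rcases eq_or_ne i j with rfl | hij
  · rfl
  have hzne : ∀ p q : Fin n, p ≠ q → z p ≠ z q := fun p q hpq h => hpq (hz h)
  have key : ⁅H i, H j⁆ = (0 : ⨂[ℂ] (_ : Fin n), A) := by
    rw [hHe i, hHe j, sum_lie']
    have step : ∀ k : Fin n, ⁅c i k • Ω i k, ∑ l ∈ Finset.univ.filter (· ≠ j), c j l • Ω j l⁆
        = ∑ l ∈ Finset.univ.filter (· ≠ j), (c i k * c j l) • ⁅Ω i k, Ω j l⁆ := by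
      intro k
      rw [lie_sum']
      refine Finset.sum_congr rfl fun l _ => ?_
      rw [smul_lie, lie_smul, smul_smul]
    rw [Finset.sum_congr rfl fun k _ => step k]
    set s : Finset (Fin n) := Finset.univ.filter (fun k => k ≠ i ∧ k ≠ j) with hs
    have hsplit_i : Finset.univ.filter (· ≠ i) = insert j s := by
      ext k
      simp only [hs, Finset.mem_filter, Finset.mem_univ, true_and, Finset.mem_insert]
      constructor
      · intro h
        by_cases hkj : k = j
        · exact Or.inl hkj
        · exact Or.inr ⟨h, hkj⟩
      · rintro (rfl | ⟨h1, _⟩)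
        · exact hij.symm
        · exact h1
    have hsplit_j : Finset.univ.filter (· ≠ j) = insert i s := by
      ext k
      simp only [hs, Finset.mem_filter, Finset.mem_univ, true_and, Finset.mem_insert]
      constructor
      · intro h
        by_cases hki : k = i
        · exact Or.inl hki
        · exact Or.inr ⟨hki, h⟩
      · rintro (rfl | ⟨_, h2⟩)
        · exact hij
        · exact h2
    have hjs : j ∉ s := by simp [hs]
    have his : i ∉ s := by simp [hs]
    rw [hsplit_i, Finset.sum_insert hjs]
    have inner : ∀ k ∈ s,
        (∑ l ∈ Finset.univ.filter (· ≠ j), (c i k * c j l) • ⁅Ω i k, Ω j l⁆)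
          = (c i k * c j i) • ⁅Ω i k, Ω j i⁆ + (c i k * c j k) • ⁅Ω i k, Ω j k⁆ := by
      intro k hk
      obtain ⟨hki, hkj⟩ : k ≠ i ∧ k ≠ j := by simpa [hs] using hk
      rw [hsplit_j, Finset.sum_insert his, ← Finset.insert_erase hk,
        Finset.sum_insert (Finset.notMem_erase k _)]
      rw [Finset.sum_eq_zero, add_zero]
      intro l hl
      obtain ⟨hlk, hls⟩ := Finset.mem_erase.mp hl
      obtain ⟨hli, _⟩ : l ≠ i ∧ l ≠ j := by simpa [hs] using hls
      rw [hC0 i k j l hij (Ne.symm hli) hkj (Ne.symm hlk), smul_zero]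
    rw [Finset.sum_congr rfl inner]
    have outer_j : (∑ l ∈ Finset.univ.filter (· ≠ j), (c i j * c j l) • ⁅Ω i j, Ω j l⁆)
        = ∑ l ∈ s, (c i j * c j l) • ⁅Ω i j, Ω j l⁆ := by
      rw [hsplit_j, Finset.sum_insert his, hΩsymm j i hij.symm, lie_self, smul_zero, zero_add]
    rw [outer_j, ← Finset.sum_add_distrib]
    refine Finset.sum_eq_zero fun k hk => ?_
    obtain ⟨hki, hkj⟩ : k ≠ i ∧ k ≠ j := by simpa [hs] using hk
    have hik : i ≠ k := Ne.symm hki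
    have hjk : j ≠ k := Ne.symm hkj
    have hD1 : ⁅Ω i j, Ω j k⁆ = -⁅Ω i j, Ω i k⁆ :=
      eq_neg_of_add_eq_zero_right (hC1 i j k hij hik hjk)
    have hD2 : ⁅Ω i k, Ω j i⁆ = -⁅Ω i j, Ω i k⁆ := by
      rw [hΩsymm j i hij.symm]
      exact (lie_skew _ _).symm
    have hD3 : ⁅Ω i k, Ω j k⁆ = ⁅Ω i j, Ω i k⁆ := by
      have h := hC1 i k j hik hij hkj
      rw [hΩsymm k j hkj] at h
      rw [eq_neg_of_add_eq_zero_right h]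
      exact lie_skew _ _
    rw [hD1, hD2, hD3, smul_neg, smul_neg, ← neg_smul, ← neg_smul, ← add_smul, ← add_smul]
    have hcoef : -(c i j * c j k) + (-(c i k * c j i) + c i k * c j k) = 0 := by
      have hid := gaudin_scalar_identity (hzne i j hij) (hzne i k hik) (hzne j k hjk)
      rw [hc]
      simp only
      linear_combination hid
    rw [hcoef, zero_smul]
  rw [Ring.lie_def, sub_eq_zero] at key
  exact key
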